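/- Let f be a polynomial (or entire function), and let λ be an n×n diagonal matrix with diagonal entries λ_i, τ an arbitrary n×n matrix. Then the first-order term in τ of f(λ+τ) is given by: d/dt f(λ + tτ)|_{t=0} has (i,p) entry A^{(1)}_{ip} · τ_{ip}, where A^{(1)}_{ip} = (f(λ_i) − f(λ_p))/(λ_i − λ_p) if λ_i ≠ λ_p, and A^{(1)}_{ip} = f'(λ_i) if λ_i = λ_p. -/

import Mathlib

open Polynomial Matrix Finset

/-- Entrywise derivative of `t ↦ (D + t • τ)^n` at `t = 0`. -/
private lemma pow_entry_deriv (N : ℕ) (l : Fin N → ℂ) (τ : Matrix (Fin N) (Fin N) ℂ)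
    (n : ℕ) : ∀ i p : Fin N,
    HasDerivAt (fun t : ℂ => ((Matrix.diagonal l + t • τ) ^ n) i p)
      ((∑ k ∈ Finset.range n,
        Matrix.diagonal l ^ k * τ * Matrix.diagonal l ^ (n - 1 - k)) i p) 0 := by
  set D := Matrix.diagonal l with hD
  induction n with
  | zero =>
    intro i p
    simpa using hasDerivAt_const (0 : ℂ) ((1 : Matrix (Fin N) (Fin N) ℂ) i p)
  | succ n ih =>
    intro i p
    have h1 : ∀ t : ℂ, ((D + t • τ) ^ (n + 1)) i p
        = ∑ j, ((D + t • τ) ^ n) i j * (D j p + t * τ j p) := by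
      intro t
      rw [pow_succ, Matrix.mul_apply]
      simp [Matrix.add_apply, Matrix.smul_apply, smul_eq_mul]
    have h2 : HasDerivAt
        (fun t : ℂ => ∑ j, ((D + t • τ) ^ n) i j * (D j p + t * τ j p))
        (∑ j, ((∑ k ∈ Finset.range n, D ^ k * τ * D ^ (n - 1 - k)) i j * D j p
          + (D ^ n) i j * τ j p)) 0 := by
      apply HasDerivAt.fun_sum
      intro j _
      have hg := ih i j
      have hh : HasDerivAt (fun t : ℂ => D j p + t * τ j p) (τ j p) 0 := by
        exact (((hasDerivAt_id (0:ℂ)).mul_const (τ j p)).const_add (D j p)).congr_deriv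
          (one_mul _)
      have := hg.fun_mul hh
      simpa [zero_smul, add_zero] using this
    have h3 : (∑ j, ((∑ k ∈ Finset.range n, D ^ k * τ * D ^ (n - 1 - k)) i j * D j p
          + (D ^ n) i j * τ j p))
        = ((∑ k ∈ Finset.range n, D ^ k * τ * D ^ (n - 1 - k)) * D + D ^ n * τ) i p := by
      simp [Matrix.add_apply, Matrix.mul_apply, Finset.sum_add_distrib]
    have h4 : (∑ k ∈ Finset.range (n + 1), D ^ k * τ * D ^ (n + 1 - 1 - k))
        = (∑ k ∈ Finset.range n, D ^ k * τ * D ^ (n - 1 - k)) * D + D ^ n * τ := by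
      rw [Finset.sum_range_succ, Finset.sum_mul]
      congr 1
      · apply Finset.sum_congr rfl
        intro k hk
        have hk' : k < n := Finset.mem_range.mp hk
        have he : n + 1 - 1 - k = (n - 1 - k) + 1 := by omega
        rw [he, pow_succ, ← mul_assoc]
      · simp
    rw [h4, ← h3]
    exact h2.congr_of_eventuallyEq (by filter_upwards with t using (h1 t))

/-- Entry of the sum of sandwiches. -/
private lemma sandwich_entry (N : ℕ) (l : Fin N → ℂ) (τ : Matrix (Fin N) (Fin N) ℂ)
    (n : ℕ) (i p : Fin N) :
    (∑ k ∈ Finset.range n,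
        Matrix.diagonal l ^ k * τ * Matrix.diagonal l ^ (n - 1 - k)) i p
      = (∑ k ∈ Finset.range n, l i ^ k * l p ^ (n - 1 - k)) * τ i p := by
  rw [Matrix.sum_apply, Finset.sum_mul]
  apply Finset.sum_congr rfl
  intro k _
  have : Matrix.diagonal l ^ k = Matrix.diagonal (fun j => l j ^ k) := by
    rw [Matrix.diagonal_pow]; rfl
  rw [this, Matrix.diagonal_pow, Matrix.mul_diagonal, Matrix.diagonal_mul]
  simp [Pi.pow_apply]
  ring

theorem stmt5 (N : ℕ) (f : Polynomial ℂ) (l : Fin N → ℂ)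
    (τ : Matrix (Fin N) (Fin N) ℂ) (i p : Fin N) :
    HasDerivAt
      (fun t : ℂ => (Polynomial.aeval (Matrix.diagonal l + t • τ) f) i p)
      ((if l i = l p then f.derivative.eval (l i)
        else (f.eval (l i) - f.eval (l p)) / (l i - l p)) * τ i p) 0 := by
  induction f using Polynomial.induction_on' with
  | add f g hf hg =>
    have hsum := hf.add hg
    have heq : (fun t : ℂ => (Polynomial.aeval (Matrix.diagonal l + t • τ) (f + g)) i p)
        =ᶠ[nhds 0] fun t : ℂ =>
          (Polynomial.aeval (Matrix.diagonal l + t • τ) f) i p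
          + (Polynomial.aeval (Matrix.diagonal l + t • τ) g) i p := by
      filter_upwards with t
      simp [map_add, Matrix.add_apply]
    refine (hsum.congr_of_eventuallyEq heq).congr_deriv (Eq.symm ?_)
    by_cases h : l i = l p
    · simp [h, add_mul]
    · simp only [if_neg h]
      field_simp
      rw [Polynomial.eval_add, Polynomial.eval_add]
      ring
  | monomial n a =>
    have key := (pow_entry_deriv N l τ n i p).const_mul a
    have hmono : ∀ t : ℂ,
        (Polynomial.aeval (Matrix.diagonal l + t • τ) (Polynomial.monomial n a)) i p
        = a * ((Matrix.diagonal l + t • τ) ^ n) i p := by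
      intro t
      rw [Polynomial.aeval_monomial, Algebra.algebraMap_eq_smul_one, smul_mul_assoc,
        one_mul, Matrix.smul_apply, smul_eq_mul]
    have heq : (fun t : ℂ =>
        (Polynomial.aeval (Matrix.diagonal l + t • τ) (Polynomial.monomial n a)) i p)
        =ᶠ[nhds 0] fun t : ℂ => a * ((Matrix.diagonal l + t • τ) ^ n) i p := by
      filter_upwards with t using hmono t
    refine (key.congr_of_eventuallyEq heq).congr_deriv (Eq.symm ?_)
    rw [sandwich_entry]
    by_cases h : l i = l p
    · rw [if_pos h, Polynomial.derivative_monomial]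
      have heach : ∀ k ∈ Finset.range n, l i ^ k * l p ^ (n - 1 - k) = l i ^ (n - 1) := by
        intro k hk
        rw [← h, ← pow_add]
        congr 1
        have := Finset.mem_range.mp hk
        omega
      rw [Finset.sum_congr rfl heach, Finset.sum_const, Finset.card_range]
      simp [Polynomial.eval_monomial]
      ring
    · rw [if_neg h]
      have hne : l i - l p ≠ 0 := sub_ne_zero.mpr h
      have hg : (∑ k ∈ Finset.range n, l i ^ k * l p ^ (n - 1 - k))
          = (l i ^ n - l p ^ n) / (l i - l p) := by
        rw [eq_div_iff hne, geom_sum₂_mul]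
      rw [hg]
      simp [Polynomial.eval_monomial]
      field_simp
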